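/- In the setting of the one-dimensional fully discrete implicit finite-volume scheme with no-flux boundary conditions (H : [0,∞) → ℝ convex and C¹, values V_i ∈ ℝ, symmetric weights W_j = W_{−j}, ρ_i^{**} = (ρ_i^n + ρ_i^{n+1})/2, ξ_i^{n+1} = H′(ρ_i^{n+1}) + V_i + Δx Σ_k W_{i−k} ρ_k^{**}, u_{i+1/2}^{n+1} = −(ξ_{i+1}^{n+1} − ξ_i^{n+1})/Δx, upwind fluxes F_{i+1/2}^{n+1} = ρ_i^{n+1}(u_{i+1/2}^{n+1})⁺ + ρ_{i+1}^{n+1}(u_{i+1/2}^{n+1})⁻ with F_{1/2}^{n+1} = F_{N+1/2}^{n+1} = 0, and update (ρ_i^{n+1} − ρ_i^n)/Δt + (F_{i+1/2}^{n+1} − F_{i−1/2}^{n+1})/Δx = 0), suppose ρ_i^0 ≥ 0 for all i, so that ρ_i^n ≥ 0 for all i, n. Define the fully discrete free energy F_Δ^n = Σ_i H(ρ_i^n) Δx + Σ_i V_i ρ_i^n Δx + (1/2) Σ_i Σ_k W_{i−k} ρ_i^n ρ_k^n Δx². Then for every n ≥ 0 and every Δt > 0, (F_Δ^{n+1} − F_Δ^n)/Δt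 ≤ −Σ_{i=1}^{N−1} min{ρ_i^{n+1}, ρ_{i+1}^{n+1}} |u_{i+1/2}^{n+1}|² Δx ≤ 0. -/

import Mathlib

open Real Set

noncomputable section

/-- Fully discrete potential
`ξ_i^{n+1} = H′(ρ_i^{n+1}) + V_i + Δx Σ_{k<N} W_{i−k} ρ_k^{**}` with the
semi-implicit midpoint `ρ_k^{**} = (ρ_k^n + ρ_k^{n+1})/2`; `ρold = ρ^n`,
`ρnew = ρ^{n+1}` (cells are indexed by `i = 0, …, N−1`). -/
def xiFD (N : ℕ) (Δx : ℝ) (H' : ℝ → ℝ) (V : ℕ → ℝ) (W : ℤ → ℝ)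
    (ρold ρnew : ℕ → ℝ) (i : ℕ) : ℝ :=
  H' (ρnew i) + V i
    + Δx * ∑ k ∈ Finset.range N, W ((i : ℤ) - (k : ℤ)) * ((ρold k + ρnew k) / 2)

/-- Fully discrete velocity at the edge `e` between cells `e−1` and `e`
(for `1 ≤ e ≤ N−1`): `u_e^{n+1} = −(ξ_e^{n+1} − ξ_{e−1}^{n+1})/Δx`. -/
def velFD (N : ℕ) (Δx : ℝ) (H' : ℝ → ℝ) (V : ℕ → ℝ) (W : ℤ → ℝ)
    (ρold ρnew : ℕ → ℝ) (e : ℕ) : ℝ :=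
  -(xiFD N Δx H' V W ρold ρnew e - xiFD N Δx H' V W ρold ρnew (e - 1)) / Δx

/-- Fully discrete upwind flux at edge `e`; the no-flux boundary conditions
impose `F_0 = F_N = 0`, and at interior edges
`F_e^{n+1} = ρ_{e−1}^{n+1} (u_e^{n+1})⁺ + ρ_e^{n+1} (u_e^{n+1})⁻` with
`(s)⁺ = max{s,0}`, `(s)⁻ = min{s,0}`. -/
def fluxFD (N : ℕ) (Δx : ℝ) (H' : ℝ → ℝ) (V : ℕ → ℝ) (W : ℤ → ℝ)
    (ρold ρnew : ℕ → ℝ) (e : ℕ) : ℝ :=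
  if e = 0 ∨ N ≤ e then 0
  else ρnew (e - 1) * max (velFD N Δx H' V W ρold ρnew e) 0
        + ρnew e * min (velFD N Δx H' V W ρold ρnew e) 0

/-- The fully discrete free energy
`F_Δ^n = Σ_i H(ρ_i^n) Δx + Σ_i V_i ρ_i^n Δx + (1/2) Σ_i Σ_k W_{i−k} ρ_i^n ρ_k^n Δx²`. -/
def FdiscFD (N : ℕ) (Δx : ℝ) (H : ℝ → ℝ) (V : ℕ → ℝ) (W : ℤ → ℝ)
    (ρ : ℕ → ℝ) : ℝ :=
  (∑ i ∈ Finset.range N, H (ρ i) * Δx) + (∑ i ∈ Finset.range N, V i * ρ i * Δx)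
    + (1 / 2) * ∑ i ∈ Finset.range N, ∑ k ∈ Finset.range N,
        W ((i : ℤ) - (k : ℤ)) * ρ i * ρ k * Δx ^ 2

lemma abel_sum (N : ℕ) (F c : ℕ → ℝ) (hF0 : F 0 = 0) (hFN : F N = 0) :
    ∑ i ∈ Finset.range N, c i * (F (i + 1) - F i)
      = ∑ e ∈ Finset.Ico 1 N, (c (e - 1) - c e) * F e := by
  rcases Nat.eq_zero_or_pos N with h | h
  · subst h; simp
  have h1 : ∑ e ∈ Finset.Ico 1 (N + 1), c (e - 1) * F e
      = ∑ i ∈ Finset.range N, c i * F (i + 1) := by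
    rw [Finset.sum_Ico_eq_sum_range]
    simp only [Nat.add_sub_cancel]
    refine Finset.sum_congr rfl fun i _ => ?_
    congr 2 <;> omega
  have h2 : ∑ e ∈ Finset.Ico 1 (N + 1), c (e - 1) * F e
      = ∑ e ∈ Finset.Ico 1 N, c (e - 1) * F e + c (N - 1) * F N :=
    Finset.sum_Ico_succ_top (by omega) _
  have h3 : ∑ i ∈ Finset.range N, c i * F i
      = c 0 * F 0 + ∑ e ∈ Finset.Ico 1 N, c e * F e := by
    rw [Finset.range_eq_Ico]
    exact Finset.sum_eq_sum_Ico_succ_bot h _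
  have h4 : ∑ i ∈ Finset.range N, c i * (F (i + 1) - F i)
      = ∑ i ∈ Finset.range N, c i * F (i + 1) - ∑ i ∈ Finset.range N, c i * F i := by
    rw [← Finset.sum_sub_distrib]
    exact Finset.sum_congr rfl fun i _ => by ring
  rw [h4, ← h1, h2, h3, hF0, hFN]
  have h5 : ∑ e ∈ Finset.Ico 1 N, (c (e - 1) - c e) * F e
      = ∑ e ∈ Finset.Ico 1 N, c (e - 1) * F e - ∑ e ∈ Finset.Ico 1 N, c e * F e := by
    rw [← Finset.sum_sub_distrib]
    exact Finset.sum_congr rfl fun e _ => by ring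
  rw [h5]; ring

lemma tangent_le {H H' : ℝ → ℝ} (hHconv : ConvexOn ℝ (Ici 0) H)
    (hH' : ∀ s ∈ Ici (0:ℝ), HasDerivWithinAt H (H' s) (Ici 0) s)
    {x y : ℝ} (hx : 0 ≤ x) (hy : 0 ≤ y) :
    H x - H y ≤ H' x * (x - y) := by
  rcases lt_trichotomy y x with h | h | h
  · have hs := hHconv.slope_le_of_hasDerivWithinAt hy hx h (hH' x hx)
    rw [slope_def_field] at hs
    have hpos : 0 < x - y := sub_pos.mpr h
    rw [div_le_iff₀ hpos] at hs
    linarith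
  · subst h; simp
  · have hs := hHconv.le_slope_of_hasDerivWithinAt hx hy h (hH' x hx)
    rw [slope_def_field] at hs
    have hpos : 0 < y - x := sub_pos.mpr h
    rw [le_div_iff₀ hpos] at hs
    have : H' x * (x - y) = -(H' x * (y - x)) := by ring
    rw [this]
    linarith

lemma wterm_eq (N : ℕ) (W : ℤ → ℝ) (hWsymm : ∀ j : ℤ, W (-j) = W j)
    (a b : ℕ → ℝ) (Δx : ℝ) :
    (1/2) * (∑ i ∈ Finset.range N, ∑ k ∈ Finset.range N,
        W ((i:ℤ) - (k:ℤ)) * b i * b k * Δx ^ 2)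
      - (1/2) * (∑ i ∈ Finset.range N, ∑ k ∈ Finset.range N,
        W ((i:ℤ) - (k:ℤ)) * a i * a k * Δx ^ 2)
    = ∑ i ∈ Finset.range N, (b i - a i) * Δx
        * (Δx * ∑ k ∈ Finset.range N, W ((i:ℤ) - (k:ℤ)) * ((a k + b k) / 2)) := by
  have hswap : (∑ i ∈ Finset.range N, ∑ k ∈ Finset.range N, W ((i:ℤ) - (k:ℤ)) * b i * a k)
      = ∑ i ∈ Finset.range N, ∑ k ∈ Finset.range N, W ((i:ℤ) - (k:ℤ)) * a i * b k := by
    rw [Finset.sum_comm]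
    refine Finset.sum_congr rfl fun i _ => Finset.sum_congr rfl fun k _ => ?_
    rw [show ((k:ℤ) - (i:ℤ)) = -((i:ℤ) - (k:ℤ)) by ring, hWsymm]
    ring
  have hpack : ∀ x y : ℕ → ℝ,
      (∑ i ∈ Finset.range N, ∑ k ∈ Finset.range N, W ((i:ℤ) - (k:ℤ)) * x i * y k * Δx ^ 2)
        = (∑ i ∈ Finset.range N, ∑ k ∈ Finset.range N, W ((i:ℤ) - (k:ℤ)) * x i * y k) * Δx ^ 2 := by
    intro x y
    rw [Finset.sum_mul]
    exact Finset.sum_congr rfl fun i _ => (Finset.sum_mul _ _ _).symm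
  have hC : (∑ i ∈ Finset.range N, (b i - a i) * Δx
        * (Δx * ∑ k ∈ Finset.range N, W ((i:ℤ) - (k:ℤ)) * ((a k + b k) / 2)))
      = Δx ^ 2 / 2 * ((∑ i ∈ Finset.range N, ∑ k ∈ Finset.range N, W ((i:ℤ) - (k:ℤ)) * b i * a k)
          + (∑ i ∈ Finset.range N, ∑ k ∈ Finset.range N, W ((i:ℤ) - (k:ℤ)) * b i * b k)
          - (∑ i ∈ Finset.range N, ∑ k ∈ Finset.range N, W ((i:ℤ) - (k:ℤ)) * a i * a k)
          - (∑ i ∈ Finset.range N, ∑ k ∈ Finset.range N, W ((i:ℤ) - (k:ℤ)) * a i * b k)) := by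
    have lhs_eq : (∑ i ∈ Finset.range N, (b i - a i) * Δx
        * (Δx * ∑ k ∈ Finset.range N, W ((i:ℤ) - (k:ℤ)) * ((a k + b k) / 2)))
        = ∑ i ∈ Finset.range N, ∑ k ∈ Finset.range N, Δx ^ 2 / 2
            * (W ((i:ℤ) - (k:ℤ)) * b i * a k + W ((i:ℤ) - (k:ℤ)) * b i * b k
              - W ((i:ℤ) - (k:ℤ)) * a i * a k - W ((i:ℤ) - (k:ℤ)) * a i * b k) := by
      refine Finset.sum_congr rfl fun i _ => ?_
      rw [Finset.mul_sum, Finset.mul_sum]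
      exact Finset.sum_congr rfl fun k _ => by ring
    rw [lhs_eq]
    simp only [Finset.mul_sum, Finset.sum_sub_distrib, Finset.sum_add_distrib, mul_sub, mul_add]
  rw [hpack, hpack, hC, hswap]
  ring

lemma scheme_rearrange {N : ℕ} {Δx Δt : ℝ} (hΔx : 0 < Δx) (hΔt : 0 < Δt)
    {H' : ℝ → ℝ} {V : ℕ → ℝ} {W : ℤ → ℝ} {a b : ℕ → ℝ}
    (hscheme : ∀ i < N,
      (b i - a i) / Δt + (fluxFD N Δx H' V W a b (i + 1) - fluxFD N Δx H' V W a b i) / Δx = 0)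
    {i : ℕ} (hi : i < N) :
    b i - a i = -(Δt / Δx) * (fluxFD N Δx H' V W a b (i + 1) - fluxFD N Δx H' V W a b i) := by
  have h := hscheme i hi
  field_simp at h ⊢
  linarith

lemma nonneg_step (N : ℕ) (Δx Δt : ℝ) (hΔx : 0 < Δx) (hΔt : 0 < Δt)
    (H' : ℝ → ℝ) (V : ℕ → ℝ) (W : ℤ → ℝ) (a b : ℕ → ℝ)
    (hscheme : ∀ i < N,
      (b i - a i) / Δt + (fluxFD N Δx H' V W a b (i + 1) - fluxFD N Δx H' V W a b i) / Δx = 0)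
    (ha : ∀ i < N, 0 ≤ a i) : ∀ i < N, 0 ≤ b i := by
  by_contra hcon
  push_neg at hcon
  obtain ⟨i0, hi0N, hi0⟩ := hcon
  classical
  set F : ℕ → ℝ := fluxFD N Δx H' V W a b with hFdef
  set S : Finset ℕ := (Finset.range N).filter (fun i => b i < 0) with hSdef
  have hF0 : F 0 = 0 := by simp [hFdef, fluxFD]
  have hFN : F N = 0 := by simp [hFdef, fluxFD]
  set c : ℕ → ℝ := fun i => if b i < 0 then 1 else 0 with hcdef
  have hsumS : ∑ i ∈ S, (F (i + 1) - F i)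
      = ∑ i ∈ Finset.range N, c i * (F (i + 1) - F i) := by
    rw [hSdef, Finset.sum_filter]
    refine Finset.sum_congr rfl fun i _ => ?_
    by_cases hbi : b i < 0 <;> simp [hcdef, hbi]
  have habel := abel_sum N F c hF0 hFN
  have hedge : ∀ e ∈ Finset.Ico 1 N, (c (e - 1) - c e) * F e ≤ 0 := by
    intro e he
    rw [Finset.mem_Ico] at he
    have he0 : ¬(e = 0 ∨ N ≤ e) := by omega
    have hFe : F e = b (e - 1) * max (velFD N Δx H' V W a b e) 0
        + b e * min (velFD N Δx H' V W a b e) 0 := by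
      rw [hFdef]; unfold fluxFD; rw [if_neg he0]
    have hmax : 0 ≤ max (velFD N Δx H' V W a b e) 0 := le_max_right _ _
    have hmin : min (velFD N Δx H' V W a b e) 0 ≤ 0 := min_le_right _ _
    by_cases h1 : b (e - 1) < 0 <;> by_cases h2 : b e < 0 <;>
      simp only [hcdef, h1, h2, if_pos, if_neg, if_true, if_false]
    · simp
    · -- b (e-1) < 0, 0 ≤ b e : coefficient 1, F e ≤ 0
      have p1 : b (e - 1) * max (velFD N Δx H' V W a b e) 0 ≤ 0 :=
        mul_nonpos_iff.mpr (Or.inr ⟨h1.le, hmax⟩)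
      have p2 : b e * min (velFD N Δx H' V W a b e) 0 ≤ 0 :=
        mul_nonpos_iff.mpr (Or.inl ⟨not_lt.mp h2, hmin⟩)
      rw [hFe]; linarith
    · -- 0 ≤ b (e-1), b e < 0 : coefficient -1, F e ≥ 0
      have p1 : 0 ≤ b (e - 1) * max (velFD N Δx H' V W a b e) 0 :=
        mul_nonneg (not_lt.mp h1) hmax
      have p2 : 0 ≤ b e * min (velFD N Δx H' V W a b e) 0 :=
        mul_nonneg_iff.mpr (Or.inr ⟨h2.le, hmin⟩)
      rw [hFe]; linarith
    · simp
  have hfluxsum : ∑ i ∈ S, (F (i + 1) - F i) ≤ 0 := by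
    rw [hsumS, habel]
    exact Finset.sum_nonpos hedge
  have hmemS : ∀ i ∈ S, i < N ∧ b i < 0 := by
    intro i hi
    rw [hSdef, Finset.mem_filter, Finset.mem_range] at hi
    exact hi
  have hbamS : ∑ i ∈ S, (b i - a i) = -(Δt / Δx) * ∑ i ∈ S, (F (i + 1) - F i) := by
    rw [Finset.mul_sum]
    exact Finset.sum_congr rfl fun i hi => scheme_rearrange hΔx hΔt hscheme (hmemS i hi).1
  have hlam : 0 < Δt / Δx := div_pos hΔt hΔx
  have hge : 0 ≤ ∑ i ∈ S, (b i - a i) := by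
    rw [hbamS]
    nlinarith
  have hSne : S.Nonempty := ⟨i0, by rw [hSdef, Finset.mem_filter, Finset.mem_range]; exact ⟨hi0N, hi0⟩⟩
  have hbneg : ∑ i ∈ S, b i < 0 := by
    have := Finset.sum_lt_sum_of_nonempty hSne (fun i hi => (hmemS i hi).2)
    simpa using this
  have hanneg : 0 ≤ ∑ i ∈ S, a i :=
    Finset.sum_nonneg fun i hi => ha i (hmemS i hi).1
  rw [Finset.sum_sub_distrib] at hge
  linarith

lemma main_step (N : ℕ) (Δx Δt : ℝ) (hΔx : 0 < Δx) (hΔt : 0 < Δt)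
    (H H' : ℝ → ℝ) (hHconv : ConvexOn ℝ (Ici 0) H)
    (hH' : ∀ s ∈ Ici (0 : ℝ), HasDerivWithinAt H (H' s) (Ici 0) s)
    (V : ℕ → ℝ) (W : ℤ → ℝ) (hWsymm : ∀ j : ℤ, W (-j) = W j)
    (a b : ℕ → ℝ)
    (hsch : ∀ i < N, (b i - a i) / Δt
        + (fluxFD N Δx H' V W a b (i + 1) - fluxFD N Δx H' V W a b i) / Δx = 0)
    (ha : ∀ i < N, 0 ≤ a i) (hb : ∀ i < N, 0 ≤ b i) :
    (FdiscFD N Δx H V W b - FdiscFD N Δx H V W a) / Δt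
        ≤ -(∑ e ∈ Finset.Ico 1 N,
              min (b (e - 1)) (b e) * (velFD N Δx H' V W a b e) ^ 2 * Δx) ∧
      -(∑ e ∈ Finset.Ico 1 N,
            min (b (e - 1)) (b e) * (velFD N Δx H' V W a b e) ^ 2 * Δx) ≤ 0 := by
  have hMnonneg : 0 ≤ ∑ e ∈ Finset.Ico 1 N,
      min (b (e - 1)) (b e) * (velFD N Δx H' V W a b e) ^ 2 * Δx := by
    apply Finset.sum_nonneg
    intro e he
    rw [Finset.mem_Ico] at he
    have h1 : e - 1 < N := by omega
    have hmin : 0 ≤ min (b (e - 1)) (b e) := le_min (hb _ h1) (hb _ he.2)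
    exact mul_nonneg (mul_nonneg hmin (sq_nonneg _)) hΔx.le
  refine ⟨?_, by linarith⟩
  -- step 3 : termwise entropy inequality at edges
  have step3 : ∑ e ∈ Finset.Ico 1 N,
        min (b (e - 1)) (b e) * (velFD N Δx H' V W a b e) ^ 2 * Δx
      ≤ ∑ e ∈ Finset.Ico 1 N,
        (Δx * velFD N Δx H' V W a b e) * fluxFD N Δx H' V W a b e := by
    apply Finset.sum_le_sum
    intro e he
    rw [Finset.mem_Ico] at he
    have he0 : ¬(e = 0 ∨ N ≤ e) := by omega
    have hFe : fluxFD N Δx H' V W a b e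
        = b (e - 1) * max (velFD N Δx H' V W a b e) 0
          + b e * min (velFD N Δx H' V W a b e) 0 := by
      unfold fluxFD; rw [if_neg he0]
    rw [hFe]
    rcases le_total 0 (velFD N Δx H' V W a b e) with hu | hu
    · rw [max_eq_left hu, min_eq_right hu]
      have h1 : min (b (e - 1)) (b e) * (velFD N Δx H' V W a b e) ^ 2
          ≤ b (e - 1) * (velFD N Δx H' V W a b e) ^ 2 :=
        mul_le_mul_of_nonneg_right (min_le_left _ _) (sq_nonneg _)
      have h2 := mul_le_mul_of_nonneg_right h1 hΔx.le
      calc min (b (e - 1)) (b e) * (velFD N Δx H' V W a b e) ^ 2 * Δx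
          ≤ b (e - 1) * (velFD N Δx H' V W a b e) ^ 2 * Δx := h2
        _ = (Δx * velFD N Δx H' V W a b e)
            * (b (e - 1) * velFD N Δx H' V W a b e + b e * 0) := by ring
    · rw [max_eq_right hu, min_eq_left hu]
      have h1 : min (b (e - 1)) (b e) * (velFD N Δx H' V W a b e) ^ 2
          ≤ b e * (velFD N Δx H' V W a b e) ^ 2 :=
        mul_le_mul_of_nonneg_right (min_le_right _ _) (sq_nonneg _)
      have h2 := mul_le_mul_of_nonneg_right h1 hΔx.le
      calc min (b (e - 1)) (b e) * (velFD N Δx H' V W a b e) ^ 2 * Δx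
          ≤ b e * (velFD N Δx H' V W a b e) ^ 2 * Δx := h2
        _ = (Δx * velFD N Δx H' V W a b e)
            * (b (e - 1) * 0 + b e * velFD N Δx H' V W a b e) := by ring
  -- step 1 : convexity and symmetry
  have hξexp : ∑ i ∈ Finset.range N, (b i - a i) * xiFD N Δx H' V W a b i * Δx
      = (∑ i ∈ Finset.range N, (b i - a i) * H' (b i) * Δx)
        + (∑ i ∈ Finset.range N, (b i - a i) * V i * Δx)
        + ∑ i ∈ Finset.range N, (b i - a i) * Δx
            * (Δx * ∑ k ∈ Finset.range N, W ((i:ℤ) - (k:ℤ)) * ((a k + b k) / 2)) := by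
    rw [← Finset.sum_add_distrib, ← Finset.sum_add_distrib]
    refine Finset.sum_congr rfl fun i _ => ?_
    unfold xiFD; ring
  have hH : ∑ i ∈ Finset.range N, H (b i) * Δx - ∑ i ∈ Finset.range N, H (a i) * Δx
      ≤ ∑ i ∈ Finset.range N, (b i - a i) * H' (b i) * Δx := by
    rw [← Finset.sum_sub_distrib]
    apply Finset.sum_le_sum
    intro i hi
    rw [Finset.mem_range] at hi
    have ht := tangent_le hHconv hH' (hb i hi) (ha i hi)
    calc H (b i) * Δx - H (a i) * Δx = (H (b i) - H (a i)) * Δx := by ring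
      _ ≤ H' (b i) * (b i - a i) * Δx := mul_le_mul_of_nonneg_right ht hΔx.le
      _ = (b i - a i) * H' (b i) * Δx := by ring
  have hV : ∑ i ∈ Finset.range N, V i * b i * Δx - ∑ i ∈ Finset.range N, V i * a i * Δx
      = ∑ i ∈ Finset.range N, (b i - a i) * V i * Δx := by
    rw [← Finset.sum_sub_distrib]; exact Finset.sum_congr rfl fun i _ => by ring
  have hW := wterm_eq N W hWsymm a b Δx
  have step1 : FdiscFD N Δx H V W b - FdiscFD N Δx H V W a
      ≤ ∑ i ∈ Finset.range N, (b i - a i) * xiFD N Δx H' V W a b i * Δx := by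
    unfold FdiscFD
    rw [hξexp]
    linarith
  -- step 2 : summation by parts
  have hF0 : fluxFD N Δx H' V W a b 0 = 0 := by simp [fluxFD]
  have hFN : fluxFD N Δx H' V W a b N = 0 := by simp [fluxFD]
  have step2 : ∑ i ∈ Finset.range N, (b i - a i) * xiFD N Δx H' V W a b i * Δx
      = -Δt * ∑ e ∈ Finset.Ico 1 N,
          (Δx * velFD N Δx H' V W a b e) * fluxFD N Δx H' V W a b e := by
    have h1 : ∑ i ∈ Finset.range N, (b i - a i) * xiFD N Δx H' V W a b i * Δx
        = -Δt * ∑ i ∈ Finset.range N, xiFD N Δx H' V W a b i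
            * (fluxFD N Δx H' V W a b (i + 1) - fluxFD N Δx H' V W a b i) := by
      rw [Finset.mul_sum]
      refine Finset.sum_congr rfl fun i hi => ?_
      rw [Finset.mem_range] at hi
      rw [scheme_rearrange hΔx hΔt hsch hi]
      field_simp [hΔx.ne']
    rw [h1, abel_sum N (fluxFD N Δx H' V W a b) (xiFD N Δx H' V W a b) hF0 hFN]
    congr 1
    refine Finset.sum_congr rfl fun e he => ?_
    congr 1
    unfold velFD
    field_simp [hΔx.ne']
    ring
  -- conclusion
  rw [div_le_iff₀ hΔt]
  have hfin : FdiscFD N Δx H V W b - FdiscFD N Δx H V W a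
      ≤ -Δt * ∑ e ∈ Finset.Ico 1 N,
          (Δx * velFD N Δx H' V W a b e) * fluxFD N Δx H' V W a b e := by
    rw [← step2]; exact step1
  have hmul := mul_le_mul_of_nonneg_left step3 hΔt.le
  nlinarith [hmul, hfin]

/-- Unconditional fully discrete energy dissipation. Along a
solution of the fully discrete implicit finite-volume scheme with nonnegative
initial data, the fully discrete free energy satisfies, for every `n ≥ 0` and
every `Δt > 0`,
`(F_Δ^{n+1} − F_Δ^n)/Δt ≤ −Σ_{e=1}^{N−1} min{ρ_{e−1}^{n+1}, ρ_e^{n+1}} |u_e^{n+1}|² Δx ≤ 0`. -/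
theorem fullydiscrete_energy_dissipation
    (N : ℕ) (hN : 2 ≤ N) (Δx Δt : ℝ) (hΔx : 0 < Δx) (hΔt : 0 < Δt)
    (H H' : ℝ → ℝ) (hHconv : ConvexOn ℝ (Ici 0) H)
    (hH' : ∀ s ∈ Ici (0 : ℝ), HasDerivWithinAt H (H' s) (Ici 0) s)
    (hH'cont : ContinuousOn H' (Ici 0))
    (V : ℕ → ℝ) (W : ℤ → ℝ) (hWsymm : ∀ j : ℤ, W (-j) = W j)
    (ρ : ℕ → ℕ → ℝ)
    (hscheme : ∀ n : ℕ, ∀ i < N,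
      (ρ (n + 1) i - ρ n i) / Δt
        + (fluxFD N Δx H' V W (ρ n) (ρ (n + 1)) (i + 1)
            - fluxFD N Δx H' V W (ρ n) (ρ (n + 1)) i) / Δx = 0)
    (h0 : ∀ i < N, 0 ≤ ρ 0 i) :
    ∀ n : ℕ,
      (FdiscFD N Δx H V W (ρ (n + 1)) - FdiscFD N Δx H V W (ρ n)) / Δt
        ≤ -(∑ e ∈ Finset.Ico 1 N,
              min (ρ (n + 1) (e - 1)) (ρ (n + 1) e)
                * (velFD N Δx H' V W (ρ n) (ρ (n + 1)) e) ^ 2 * Δx) ∧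
      -(∑ e ∈ Finset.Ico 1 N,
            min (ρ (n + 1) (e - 1)) (ρ (n + 1) e)
              * (velFD N Δx H' V W (ρ n) (ρ (n + 1)) e) ^ 2 * Δx) ≤ 0 := by
  have hnonneg : ∀ n, ∀ i < N, 0 ≤ ρ n i := by
    intro n
    induction n with
    | zero => exact h0
    | succ m ih => exact nonneg_step N Δx Δt hΔx hΔt H' V W (ρ m) (ρ (m + 1)) (hscheme m) ih
  intro n
  exact main_step N Δx Δt hΔx hΔt H H' hHconv hH' V W hWsymm (ρ n) (ρ (n + 1))
    (hscheme n) (hnonneg n) (hnonneg (n + 1))
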